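/- Let 𝓙 ⊆ 𝒫(V) be a nonempty antichain of nonempty subsets of V. For every bounded measurable f : X → ℝ, |∫_X f dμ| ≤ ‖f‖_{U^{V,𝓙}}. -/

import Mathlib

open MeasureTheory
open scoped Classical

noncomputable section

namespace UAux

variable {α : Type*} [MeasurableSpace α]

/-- Bounded a.e.-strongly measurable functions are integrable on finite measure spaces. -/
lemma integrable_of_bound (μ : Measure α) [IsFiniteMeasure μ] (G : α → ℝ) (D : ℝ)
    (hG : AEStronglyMeasurable G μ) (hD : ∀ x, |G x| ≤ D) : Integrable G μ :=
  ⟨hG, HasFiniteIntegral.of_bounded (C := D) (Filter.Eventually.of_forall fun x => by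
    simpa [Real.norm_eq_abs] using hD x)⟩

/-- Cauchy–Schwarz: on a probability space, `(∫ G)^2 ≤ ∫ G^2`. -/
lemma sq_integral_le (μ : Measure α) [IsProbabilityMeasure μ] (G : α → ℝ)
    (hG : AEStronglyMeasurable G μ) (D : ℝ) (hD : ∀ x, |G x| ≤ D) :
    (∫ x, G x ∂μ) ^ 2 ≤ ∫ x, (G x) ^ 2 ∂μ := by
  have hint : Integrable G μ := integrable_of_bound μ G D hG hD
  have hG2 : AEStronglyMeasurable (fun x => (G x)^2) μ := by
    simp only [sq]; exact hG.mul hG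
  have hint2 : Integrable (fun x => (G x)^2) μ :=
    integrable_of_bound μ _ (D^2) hG2 (fun x => by
      rw [abs_pow]
      exact pow_le_pow_left₀ (abs_nonneg _) (hD x) 2)
  set c := ∫ x, G x ∂μ with hc
  have h0 : 0 ≤ ∫ x, (G x - c)^2 ∂μ := integral_nonneg fun x => sq_nonneg _
  have h1 : Integrable (fun x => (G x)^2 - (2*c) * G x) μ := hint2.sub (hint.const_mul (2*c))
  have he : ∫ x, (G x - c)^2 ∂μ = (∫ x, (G x)^2 ∂μ) - c^2 := by
    calc ∫ x, (G x - c)^2 ∂μ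
        = ∫ x, (((G x)^2 - (2*c) * G x) + c^2) ∂μ := by congr 1; funext x; ring
      _ = (∫ x, ((G x)^2 - (2*c) * G x) ∂μ) + ∫ _, (c^2 : ℝ) ∂μ :=
          integral_add h1 (integrable_const _)
      _ = ((∫ x, (G x)^2 ∂μ) - ∫ x, (2*c) * G x ∂μ) + c^2 := by
          rw [integral_sub hint2 (hint.const_mul (2*c)), integral_const]; simp
      _ = (∫ x, (G x)^2 ∂μ) - c^2 := by rw [integral_const_mul, ← hc]; ring
  linarith [he ▸ h0]

/-- Iterated Cauchy–Schwarz for nonnegative functions: `(∫ G)^(2^n) ≤ ∫ G^(2^n)`. -/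
lemma pow_integral_le_of_nonneg (μ : Measure α) [IsProbabilityMeasure μ] (n : ℕ) :
    ∀ (G : α → ℝ), AEStronglyMeasurable G μ → (∀ x, 0 ≤ G x) → ∀ D : ℝ, (∀ x, G x ≤ D) →
    (∫ x, G x ∂μ) ^ (2^n) ≤ ∫ x, (G x) ^ (2^n) ∂μ := by
  induction n with
  | zero => intro G hG h0 D hD; simp
  | succ n ih =>
    intro G hG h0 D hD
    have habs : ∀ x, |G x| ≤ D := fun x => by rw [abs_of_nonneg (h0 x)]; exact hD x
    have hGn : AEStronglyMeasurable (fun x => (G x)^(2^n)) μ := by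
      induction (2^n) with
      | zero => simpa using aestronglyMeasurable_const
      | succ k ihk => simp only [pow_succ]; exact ihk.mul hG
    calc (∫ x, G x ∂μ) ^ (2^(n+1))
        = ((∫ x, G x ∂μ) ^ (2^n))^2 := by rw [← pow_mul, pow_succ]
      _ ≤ (∫ x, (G x)^(2^n) ∂μ)^2 :=
          pow_le_pow_left₀ (pow_nonneg (integral_nonneg h0) _) (ih G hG h0 D hD) 2
      _ ≤ ∫ x, ((G x)^(2^n))^2 ∂μ :=
          sq_integral_le μ _ hGn (D^(2^n)) (fun x => by
            rw [abs_pow]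
            exact pow_le_pow_left₀ (abs_nonneg _) (habs x) _)
      _ = ∫ x, (G x)^(2^(n+1)) ∂μ := by simp_rw [← pow_mul, pow_succ]

/-- Even-power Jensen: `(∫ G)^(2^n) ≤ ∫ G^(2^n)` for `n ≥ 1` and bounded measurable `G`. -/
lemma pow_integral_le_even (μ : Measure α) [IsProbabilityMeasure μ] (n : ℕ) (hn : n ≠ 0)
    (G : α → ℝ) (hG : AEStronglyMeasurable G μ) (D : ℝ) (hD : ∀ x, |G x| ≤ D) :
    (∫ x, G x ∂μ) ^ (2^n) ≤ ∫ x, (G x) ^ (2^n) ∂μ := by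
  have heven : Even (2^n) := by
    rcases Nat.exists_eq_succ_of_ne_zero hn with ⟨k, rfl⟩
    exact ⟨2^k, by rw [pow_succ]; ring⟩
  have habs : AEStronglyMeasurable (fun x => |G x|) μ := by
    simpa [Real.norm_eq_abs] using hG.norm
  calc (∫ x, G x ∂μ) ^ (2^n)
      ≤ |∫ x, G x ∂μ| ^ (2^n) := by rw [← abs_pow]; exact le_abs_self _
    _ ≤ (∫ x, |G x| ∂μ) ^ (2^n) := by
        refine pow_le_pow_left₀ (abs_nonneg _) ?_ _
        simpa [Real.norm_eq_abs] using norm_integral_le_integral_norm G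
    _ ≤ ∫ x, |G x| ^ (2^n) ∂μ :=
        pow_integral_le_of_nonneg μ n _ habs (fun x => abs_nonneg _) D hD
    _ = ∫ x, (G x) ^ (2^n) ∂μ := by simp_rw [heven.pow_abs]

section Box

variable {ι : Type} [Fintype ι] [DecidableEq ι] {Y : ι → Type} [∀ i, MeasurableSpace (Y i)]
  (ν : ∀ i, Measure (Y i)) [∀ i, IsProbabilityMeasure (ν i)]

/-- Select the `ω`-vertex of a cube configuration. -/
def eSel (Y : ι → Type) (ω : ι → Bool) (z : ∀ q : ι × Bool, Y q.1) : ∀ i, Y i :=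
  fun i => z (i, ω i)

lemma measurable_eSel (ω : ι → Bool) : Measurable (eSel Y ω) :=
  measurable_pi_lambda _ fun _ => measurable_pi_apply _

lemma measurePreserving_eSel (ω : ι → Bool) :
    MeasurePreserving (eSel Y ω) (Measure.pi fun q : ι × Bool => ν q.1) (Measure.pi ν) := by
  refine ⟨measurable_eSel ω, ?_⟩
  refine (Measure.pi_eq fun s hs => ?_).symm
  rw [Measure.map_apply (measurable_eSel ω) (MeasurableSet.univ_pi hs)]
  have hpre : eSel Y ω ⁻¹' (Set.pi Set.univ s) =
      Set.pi Set.univ (fun q : ι × Bool => if q.2 = ω q.1 then s q.1 else Set.univ) := by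
    ext z
    simp only [Set.mem_preimage, Set.mem_pi, Set.mem_univ, true_implies, eSel]
    constructor
    · rintro h ⟨i, b⟩
      by_cases hb : b = ω i
      · subst hb; simpa using h i
      · simp [hb]
    · intro h i
      have := h (i, ω i)
      simpa using this
  rw [hpre, Measure.pi_pi]
  rw [Fintype.prod_prod_type]
  refine Finset.prod_congr rfl fun i _ => ?_
  rw [Fintype.prod_bool]
  cases hωi : ω i <;> simp [hωi]

/-- The set of cube vertices supported on `S`. -/
def boxSet (ι : Type) [Fintype ι] (S : Finset ι) : Finset (ι → Bool) :=
  Finset.univ.filter fun ω => ∀ i ∉ S, ω i = false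

/-- Partial box integral. -/
def BoxInt (f : (∀ i, Y i) → ℝ) (S : Finset ι) : ℝ :=
  ∫ z, ∏ ω ∈ boxSet ι S, f (eSel Y ω z) ∂(Measure.pi fun q : ι × Bool => ν q.1)

lemma boxSet_empty : boxSet ι (∅ : Finset ι) = {fun _ => false} := by
  ext ω; simp [boxSet, funext_iff]

lemma boxInt_empty (f : (∀ i, Y i) → ℝ) (hfm : Measurable f) :
    BoxInt ν f ∅ = ∫ x, f x ∂(Measure.pi ν) := by
  rw [BoxInt, boxSet_empty]
  simp only [Finset.prod_singleton]
  rw [← (measurePreserving_eSel ν (fun _ => false)).map_eq,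
    integral_map (measurable_eSel _).aemeasurable hfm.aestronglyMeasurable]

lemma prod_bound (f : (∀ i, Y i) → ℝ) (D : ℝ) (hD : ∀ x, |f x| ≤ D) (T : Finset (ι → Bool))
    (z : ∀ q : ι × Bool, Y q.1) :
    |∏ ω ∈ T, f (eSel Y ω z)| ≤ D ^ T.card := by
  rw [Finset.abs_prod]
  calc ∏ ω ∈ T, |f (eSel Y ω z)| ≤ ∏ _ω ∈ T, D :=
        Finset.prod_le_prod (fun _ _ => abs_nonneg _) (fun ω _ => hD _)
    _ = D ^ T.card := Finset.prod_const D

lemma boxInt_step (f : (∀ i, Y i) → ℝ) (hfm : Measurable f) (D : ℝ)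
    (hD : ∀ x, |f x| ≤ D) (S : Finset ι) (i₀ : ι) (hi₀ : i₀ ∉ S) :
    (BoxInt ν f S) ^ 2 ≤ BoxInt ν f (insert i₀ S) := by
  classical
  let p : ι × Bool → Prop := fun q => q.1 = i₀
  let E := MeasurableEquiv.piEquivPiSubtypeProd (fun q : ι × Bool => Y q.1) p
  have hE := measurePreserving_piEquivPiSubtypeProd (fun q : ι × Bool => ν q.1) p
  set κ₁ : Measure (∀ q : Subtype p, Y q.1.1) := Measure.pi fun q => ν q.1.1 with hκ₁
  set κ₂ : Measure (∀ q : {q : ι × Bool // ¬ p q}, Y q.1.1) := Measure.pi fun q => ν q.1.1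
    with hκ₂
  let qf : Subtype p := ⟨(i₀, false), rfl⟩
  let qt : Subtype p := ⟨(i₀, true), rfl⟩
  let cst : Y i₀ → ∀ q : Subtype p, Y q.1.1 := fun t q => cast (congrArg Y (q.2 : q.1.1 = i₀).symm) t
  let φ : (∀ q : {q : ι × Bool // ¬ p q}, Y q.1.1) → Y i₀ → ℝ :=
    fun b t => ∏ ω ∈ boxSet ι S, f (eSel Y ω (E.symm (cst t, b)))
  have hsymm : ∀ (a : ∀ q : Subtype p, Y q.1.1) (b : ∀ q : {q : ι × Bool // ¬ p q}, Y q.1.1)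
      (q : ι × Bool), E.symm (a, b) q = if h : p q then a ⟨q, h⟩ else b ⟨q, h⟩ :=
    fun _ _ _ => rfl
  have hmembox : ∀ ω ∈ boxSet ι S, ω i₀ = false := by
    intro ω hω
    simp only [boxSet, Finset.mem_filter] at hω
    exact hω.2 i₀ hi₀
  -- Key pointwise identities
  have K1 : ∀ (a : ∀ q : Subtype p, Y q.1.1) (b : ∀ q : {q : ι × Bool // ¬ p q}, Y q.1.1),
      ∀ ω ∈ boxSet ι S,
      f (eSel Y ω (E.symm (a, b))) = f (eSel Y ω (E.symm (cst (a qf), b))) := by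
    intro a b ω hω
    congr 1
    funext i
    show E.symm (a, b) (i, ω i) = E.symm (cst (a qf), b) (i, ω i)
    rw [hsymm, hsymm]
    by_cases h : p (i, ω i)
    · rw [dif_pos h, dif_pos h]
      have h' : i = i₀ := h
      subst h'
      have hωf : ω i = false := hmembox ω hω
      revert h
      rw [hωf]
      intro h
      rfl
    · rw [dif_neg h, dif_neg h]
  have K2 : ∀ (a : ∀ q : Subtype p, Y q.1.1) (b : ∀ q : {q : ι × Bool // ¬ p q}, Y q.1.1),
      ∀ ω ∈ boxSet ι S,
      f (eSel Y (Function.update ω i₀ true) (E.symm (a, b)))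
        = f (eSel Y ω (E.symm (cst (a qt), b))) := by
    intro a b ω hω
    congr 1
    funext i
    show E.symm (a, b) (i, Function.update ω i₀ true i) = E.symm (cst (a qt), b) (i, ω i)
    by_cases h : i = i₀
    · subst h
      have hωf : ω i = false := hmembox ω hω
      rw [Function.update_self, hωf, hsymm, hsymm, dif_pos rfl, dif_pos rfl]
      rfl
    · rw [Function.update_of_ne h, hsymm, hsymm]
      have hp : ¬ p (i, ω i) := h
      rw [dif_neg hp, dif_neg hp]
  -- decomposition of the vertex set
  have hsplit : boxSet ι (insert i₀ S)
      = boxSet ι S ∪ (boxSet ι S).image (fun ω => Function.update ω i₀ true) := by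
    ext ω
    simp only [boxSet, Finset.mem_filter, Finset.mem_univ, true_and, Finset.mem_union,
      Finset.mem_image]
    constructor
    · intro h
      by_cases hh : ω i₀ = false
      · left
        intro i hi
        by_cases hii : i = i₀
        · subst hii; exact hh
        · exact h i (by simp [Finset.mem_insert, hii, hi])
      · right
        refine ⟨Function.update ω i₀ false, fun i hi => ?_, ?_⟩
        · by_cases hii : i = i₀
          · subst hii; simp
          · rw [Function.update_of_ne hii]; exact h i (by simp [Finset.mem_insert, hii, hi])
        · funext i
          by_cases hii : i = i₀
          · subst hii
            rw [Function.update_self]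
            exact (Bool.not_eq_false _).mp hh |>.symm
          · rw [Function.update_of_ne hii, Function.update_of_ne hii]
    · rintro (h | ⟨ω', hω', rfl⟩)
      · intro i hi
        exact h i fun hiS => hi (Finset.mem_insert_of_mem hiS)
      · intro i hi
        have hii : i ≠ i₀ := fun e => hi (e ▸ Finset.mem_insert_self _ _)
        rw [Function.update_of_ne hii]
        exact hω' i fun hiS => hi (Finset.mem_insert_of_mem hiS)
  have hdisj : Disjoint (boxSet ι S) ((boxSet ι S).image (fun ω => Function.update ω i₀ true)) := by
    rw [Finset.disjoint_left]
    rintro ω h1 h2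
    rcases Finset.mem_image.mp h2 with ⟨ω', _, rfl⟩
    have := hmembox _ h1
    simp at this
  have hinj : ∀ ω1 ∈ boxSet ι S, ∀ ω2 ∈ boxSet ι S,
      Function.update ω1 i₀ true = Function.update ω2 i₀ true → ω1 = ω2 := by
    intro ω1 h1 ω2 h2 he
    funext i
    by_cases hii : i = i₀
    · subst hii; rw [hmembox ω1 h1, hmembox ω2 h2]
    · have := congrFun he i
      rwa [Function.update_of_ne hii, Function.update_of_ne hii] at this
  have Psplit : ∀ (a : ∀ q : Subtype p, Y q.1.1) (b : ∀ q : {q : ι × Bool // ¬ p q}, Y q.1.1),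
      ∏ ω ∈ boxSet ι (insert i₀ S), f (eSel Y ω (E.symm (a, b)))
        = φ b (a qf) * φ b (a qt) := by
    intro a b
    rw [hsplit, Finset.prod_union hdisj, Finset.prod_image hinj]
    congr 1
    · exact Finset.prod_congr rfl (K1 a b)
    · exact Finset.prod_congr rfl (K2 a b)
  have PS : ∀ (a : ∀ q : Subtype p, Y q.1.1) (b : ∀ q : {q : ι × Bool // ¬ p q}, Y q.1.1),
      ∏ ω ∈ boxSet ι S, f (eSel Y ω (E.symm (a, b))) = φ b (a qf) := by
    intro a b
    exact Finset.prod_congr rfl (K1 a b)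
  -- the two-coordinate product integral
  have hcard : (Finset.univ : Finset (Subtype p)) = {qf, qt} := by
    ext q
    obtain ⟨⟨i, c⟩, h⟩ := q
    have h' : i = i₀ := h
    subst h'
    cases c <;> simp [qf, qt]
  have hqfqt : qf ≠ qt := by
    intro h
    have := congrArg (fun q : Subtype p => q.1.2) h
    simp at this
  have key2 : ∀ g₁ g₂ : Y i₀ → ℝ,
      ∫ a, g₁ (a qf) * g₂ (a qt) ∂κ₁ = (∫ t, g₁ t ∂ν i₀) * (∫ t, g₂ t ∂ν i₀) := by
    intro g₁ g₂
    let F : ∀ q : Subtype p, Y q.1.1 → ℝ := fun q y =>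
      if q.1.2 = true then g₂ (cast (congrArg Y (q.2 : q.1.1 = i₀)) y)
      else g₁ (cast (congrArg Y (q.2 : q.1.1 = i₀)) y)
    have h1 : ∀ a : ∀ q : Subtype p, Y q.1.1, g₁ (a qf) * g₂ (a qt) = ∏ q, F q (a q) := by
      intro a
      rw [hcard, Finset.prod_insert (by simp [hqfqt]), Finset.prod_singleton]
      rfl
    have h2 : ∫ a, ∏ q, F q (a q) ∂κ₁ = ∏ q, ∫ y, F q y ∂ν q.1.1 := by
      letI : ∀ q : Subtype p, MeasureSpace (Y q.1.1) :=
        fun q => { toMeasurableSpace := inferInstance, volume := ν q.1.1 }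
      letI : ∀ q : Subtype p, SigmaFinite (volume : Measure (Y q.1.1)) :=
        fun q => inferInstanceAs (SigmaFinite (ν q.1.1))
      exact integral_fintype_prod_eq_prod F
    refine (integral_congr_ae (Filter.Eventually.of_forall h1)).trans ?_
    rw [h2, hcard, Finset.prod_insert (by simp [hqfqt]), Finset.prod_singleton]
    rfl
  have key1 : ∀ g₁ : Y i₀ → ℝ, ∫ a, g₁ (a qf) ∂κ₁ = ∫ t, g₁ t ∂ν i₀ := by
    intro g₁
    have := key2 g₁ (fun _ => (1 : ℝ))
    simpa using this
  haveI hκ₁P : IsProbabilityMeasure κ₁ := by rw [hκ₁]; infer_instance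
  haveI hκ₂P : IsProbabilityMeasure κ₂ := by rw [hκ₂]; infer_instance
  have hPmeas : ∀ T : Finset ι, Measurable fun z : ∀ q : ι × Bool, Y q.1 =>
      ∏ ω ∈ boxSet ι T, f (eSel Y ω z) :=
    fun T => Finset.measurable_prod _ fun ω _ => hfm.comp (measurable_eSel ω)
  have hA : ∀ T : Finset ι, BoxInt ν f T
      = ∫ b, ∫ a, ∏ ω ∈ boxSet ι T, f (eSel Y ω (E.symm (a, b))) ∂κ₁ ∂κ₂ := by
    intro T
    have hmm : Measurable fun w : (∀ q : Subtype p, Y q.1.1) × (∀ q : {q : ι × Bool // ¬ p q}, Y q.1.1) =>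
        ∏ ω ∈ boxSet ι T, f (eSel Y ω (E.symm w)) := (hPmeas T).comp E.symm.measurable
    have hint : Integrable (fun w : (∀ q : Subtype p, Y q.1.1) × (∀ q : {q : ι × Bool // ¬ p q}, Y q.1.1) =>
        ∏ ω ∈ boxSet ι T, f (eSel Y ω (E.symm w))) (κ₁.prod κ₂) :=
      integrable_of_bound _ _ (D ^ (boxSet ι T).card) hmm.aestronglyMeasurable
        (fun w => prod_bound f D hD _ _)
    have h0 : BoxInt ν f T = ∫ w, ∏ ω ∈ boxSet ι T, f (eSel Y ω (E.symm w)) ∂(κ₁.prod κ₂) := by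
      rw [BoxInt, ← hE.map_eq, integral_map hE.measurable.aemeasurable hmm.aestronglyMeasurable]
      refine integral_congr_ae (Filter.Eventually.of_forall fun z => ?_)
      congr 1
      exact (E.symm_apply_apply z).symm
    rw [h0, integral_prod_symm _ hint]
  have hBins : BoxInt ν f (insert i₀ S) = ∫ b, (∫ t, φ b t ∂ν i₀)^2 ∂κ₂ := by
    rw [hA (insert i₀ S)]
    refine integral_congr_ae (Filter.Eventually.of_forall fun b => ?_)
    calc ∫ a, ∏ ω ∈ boxSet ι (insert i₀ S), f (eSel Y ω (E.symm (a, b))) ∂κ₁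
        = ∫ a, φ b (a qf) * φ b (a qt) ∂κ₁ := by simp_rw [Psplit]
      _ = (∫ t, φ b t ∂ν i₀) * (∫ t, φ b t ∂ν i₀) := key2 _ _
      _ = (∫ t, φ b t ∂ν i₀)^2 := (sq _).symm
  have hBS : BoxInt ν f S = ∫ b, (∫ t, φ b t ∂ν i₀) ∂κ₂ := by
    rw [hA S]
    refine integral_congr_ae (Filter.Eventually.of_forall fun b => ?_)
    calc ∫ a, ∏ ω ∈ boxSet ι S, f (eSel Y ω (E.symm (a, b))) ∂κ₁
        = ∫ a, φ b (a qf) ∂κ₁ := by simp_rw [PS]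
      _ = ∫ t, φ b t ∂ν i₀ := key1 _
  have hφm : Measurable (fun bt : (∀ q : {q : ι × Bool // ¬ p q}, Y q.1.1) × Y i₀ => φ bt.1 bt.2) := by
    apply Finset.measurable_prod
    intro ω _
    apply hfm.comp
    apply (measurable_eSel ω).comp
    apply E.symm.measurable.comp
    refine Measurable.prodMk ?_ measurable_fst
    apply measurable_pi_lambda
    intro q
    obtain ⟨⟨i, c⟩, h⟩ := q
    have h' : i = i₀ := h
    subst h'
    exact measurable_snd
  have hGsm : StronglyMeasurable fun b => ∫ t, φ b t ∂ν i₀ :=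
    hφm.stronglyMeasurable.integral_prod_right'
  have hGb : ∀ b, |∫ t, φ b t ∂ν i₀| ≤ D ^ (boxSet ι S).card := by
    intro b
    have := norm_integral_le_of_norm_le_const (μ := ν i₀) (f := fun t => φ b t)
      (C := D ^ (boxSet ι S).card) (Filter.Eventually.of_forall fun t => by
        simpa [Real.norm_eq_abs] using prod_bound f D hD (boxSet ι S) (E.symm (cst t, b)))
    simpa [Real.norm_eq_abs, measure_univ] using this
  rw [hBS, hBins]
  exact sq_integral_le κ₂ (fun b => ∫ t, φ b t ∂ν i₀) hGsm.aestronglyMeasurable _ hGb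

lemma le_boxInt (f : (∀ i, Y i) → ℝ) (hfm : Measurable f) (D : ℝ) (hD : ∀ x, |f x| ≤ D)
    (S : Finset ι) (hS : S.Nonempty) :
    |∫ x, f x ∂(Measure.pi ν)| ^ (2 ^ S.card) ≤ BoxInt ν f S := by
  induction hS using Finset.Nonempty.cons_induction with
  | singleton a =>
    have h := boxInt_step ν f hfm D hD ∅ a (Finset.notMem_empty a)
    rw [boxInt_empty ν f hfm] at h
    have : (insert a ∅ : Finset ι) = {a} := rfl
    rw [this] at h
    calc |∫ x, f x ∂(Measure.pi ν)| ^ (2 ^ ({a} : Finset ι).card)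
        = (∫ x, f x ∂(Measure.pi ν)) ^ 2 := by
          rw [Finset.card_singleton, pow_one, sq_abs]
      _ ≤ BoxInt ν f {a} := h
  | cons a s ha hs ih =>
    have h := boxInt_step ν f hfm D hD s a ha
    calc |∫ x, f x ∂(Measure.pi ν)| ^ (2 ^ (Finset.cons a s ha).card)
        = (|∫ x, f x ∂(Measure.pi ν)| ^ (2 ^ s.card)) ^ 2 := by
          rw [Finset.card_cons, ← pow_mul, pow_succ]
      _ ≤ (BoxInt ν f s) ^ 2 := pow_le_pow_left₀ (pow_nonneg (abs_nonneg _) _) ih 2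
      _ ≤ BoxInt ν f (insert a s) := h
      _ = BoxInt ν f (Finset.cons a s ha) := by rw [Finset.cons_eq_insert]

theorem abs_integral_pow_le_box [Nonempty ι] (f : (∀ i, Y i) → ℝ) (hfm : Measurable f)
    (D : ℝ) (hD : ∀ x, |f x| ≤ D) :
    |∫ x, f x ∂(Measure.pi ν)| ^ (2 ^ Fintype.card ι)
      ≤ ∫ z, ∏ ω : ι → Bool, f (eSel Y ω z) ∂(Measure.pi fun q : ι × Bool => ν q.1) := by
  have h := le_boxInt ν f hfm D hD Finset.univ Finset.univ_nonempty
  have hbox : boxSet ι Finset.univ = Finset.univ := by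
    ext ω; simp [boxSet]
  rw [BoxInt, hbox] at h
  simpa [Finset.card_univ] using h

end Box

end UAux


/-- Recombine `(x_{V∖J}, x_J^ω)` into a point of `X = ∏_v X_v`. -/
def recomb {V : Type} (X : V → Type) (J : Set V)
    (y : ∀ v : ↥(Jᶜ : Set V), X ↑v) (z : ∀ p : ↥J × Bool, X ↑p.1)
    (ω : ↥J → Bool) : ∀ v, X v := fun v =>
  if h : v ∈ J then z (⟨v, h⟩, ω ⟨v, h⟩) else y ⟨v, h⟩

/-- The integral `∫_{X⁺_J} ∏_{ω ∈ {0,1}^J} f(x_{V∖J}, x_J^ω) dμ⁺_J`. -/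
def UJint {V : Type} [Fintype V] [DecidableEq V] (X : V → Type)
    [∀ v, MeasurableSpace (X v)] (μ : ∀ v, Measure (X v)) (J : Set V)
    (f : (∀ v, X v) → ℝ) : ℝ :=
  ∫ p : (∀ v : ↥(Jᶜ : Set V), X ↑v) × (∀ q : ↥J × Bool, X ↑q.1),
    ∏ ω : ↥J → Bool, f (recomb X J p.1 p.2 ω)
    ∂((Measure.pi fun v : ↥(Jᶜ : Set V) => μ ↑v).prod
      (Measure.pi fun q : ↥J × Bool => μ ↑q.1))

/-- The seminorm `‖f‖_{U^{V,J}} = (UJint f)^{1/2^{|J|}}`. -/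
def UJnorm {V : Type} [Fintype V] [DecidableEq V] (X : V → Type)
    [∀ v, MeasurableSpace (X v)] (μ : ∀ v, Measure (X v)) (J : Set V)
    (f : (∀ v, X v) → ℝ) : ℝ :=
  (UJint X μ J f) ^ ((1 : ℝ) / 2 ^ J.ncard)

/-- The seminorm `‖f‖_{U^{V,𝓙}}`, an infimum over decompositions `f = Σ_i f_i` into
bounded measurable pieces. -/
def UFamNorm {V : Type} [Fintype V] [DecidableEq V] (X : V → Type)
    [∀ v, MeasurableSpace (X v)] (μ : ∀ v, Measure (X v)) (𝓙 : Finset (Set V))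
    (f : (∀ v, X v) → ℝ) : ℝ :=
  sInf {r : ℝ | ∃ (m : ℕ) (g : ℕ → (∀ v, X v) → ℝ),
    (∀ i, (∃ C, ∀ x, |g i x| ≤ C) ∧ Measurable (g i)) ∧
    (∀ x, f x = ∑ i ∈ Finset.range (m + 1), g i x) ∧
    r = ∑ i ∈ Finset.range (m + 1),
        (∏ J ∈ 𝓙, UJnorm X μ J (g i) ^ (2 ^ J.ncard)) ^
          ((1 : ℝ) / ∑ J ∈ 𝓙, (2 : ℝ) ^ J.ncard)}


namespace UAux

/-- Combine a `Jᶜ`-indexed point and a `J`-indexed point into a point of the product. -/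
def combineJ (V : Type) (X : V → Type) (J : Set V)
    (y : ∀ v : ↥(Jᶜ : Set V), X ↑v) (x : ∀ i : ↥J, X ↑i) : ∀ v, X v := fun v =>
  if h : v ∈ J then x ⟨v, h⟩ else y ⟨v, h⟩

lemma measurable_combineJ (V : Type) (X : V → Type) [∀ v, MeasurableSpace (X v)] (J : Set V) :
    Measurable (fun yx : (∀ v : ↥(Jᶜ : Set V), X ↑v) × (∀ i : ↥J, X ↑i) =>
      combineJ V X J yx.1 yx.2) := by
  apply measurable_pi_lambda
  intro v
  by_cases h : v ∈ J
  · simp only [combineJ, dif_pos h]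
    exact (measurable_pi_apply _).comp measurable_snd
  · simp only [combineJ, dif_neg h]
    exact (measurable_pi_apply _).comp measurable_fst

lemma abs_integral_le_UJnorm_aux (V : Type) [Fintype V] [DecidableEq V]
    (X : V → Type) [∀ v, MeasurableSpace (X v)]
    (μ : ∀ v, Measure (X v)) [∀ v, IsProbabilityMeasure (μ v)]
    (J : Set V) (hJ : J.Nonempty)
    (f : (∀ v, X v) → ℝ) (D : ℝ) (hD0 : 0 ≤ D) (hD : ∀ x, |f x| ≤ D) (hfm : Measurable f) :
    |∫ x, f x ∂(Measure.pi μ)| ≤ UJnorm X μ J f := by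
  classical
  haveI : Nonempty ↥J := ⟨⟨hJ.choose, hJ.choose_spec⟩⟩
  set m := Fintype.card ↥J with hm
  have hm0 : m ≠ 0 := Fintype.card_pos.ne'
  set κc : Measure (∀ v : ↥(Jᶜ : Set V), X ↑v) := Measure.pi fun v => μ ↑v with hκc
  set κJ2 : Measure (∀ q : ↥J × Bool, X ↑q.1) := Measure.pi fun q => μ ↑q.1 with hκJ2
  set κJ : Measure (∀ i : ↥J, X ↑i) := Measure.pi fun i => μ ↑i with hκJ
  haveI : IsProbabilityMeasure κc := by rw [hκc]; infer_instance
  haveI : IsProbabilityMeasure κJ2 := by rw [hκJ2]; infer_instance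
  haveI : IsProbabilityMeasure κJ := by rw [hκJ]; infer_instance
  set F : (∀ v : ↥(Jᶜ : Set V), X ↑v) × (∀ q : ↥J × Bool, X ↑q.1) → ℝ :=
    fun pz => ∏ ω : ↥J → Bool, f (recomb X J pz.1 pz.2 ω) with hF
  have hFm : Measurable F := by
    rw [hF]
    apply Finset.measurable_prod
    intro ω _
    have hrw : (fun pz : (∀ v : ↥(Jᶜ : Set V), X ↑v) × (∀ q : ↥J × Bool, X ↑q.1) =>
        f (recomb X J pz.1 pz.2 ω))
        = fun pz => f (combineJ V X J pz.1 (eSel (fun i : ↥J => X ↑i) ω pz.2)) := rfl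
    rw [hrw]
    exact hfm.comp ((measurable_combineJ V X J).comp
      (measurable_fst.prodMk ((measurable_eSel ω).comp measurable_snd)))
  have hFb : ∀ pz, |F pz| ≤ D ^ Fintype.card (↥J → Bool) := by
    intro pz
    rw [hF, Finset.abs_prod]
    calc ∏ ω : ↥J → Bool, |f (recomb X J pz.1 pz.2 ω)|
        ≤ ∏ _ω : ↥J → Bool, D :=
          Finset.prod_le_prod (fun _ _ => abs_nonneg _) (fun ω _ => hD _)
      _ = D ^ Fintype.card (↥J → Bool) := by rw [Finset.prod_const, Finset.card_univ]
  have h1 : UJint X μ J f = ∫ y, ∫ z, F (y, z) ∂κJ2 ∂κc := by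
    rw [UJint]
    exact integral_prod _ (integrable_of_bound _ _ _ hFm.aestronglyMeasurable hFb)
  set H : (∀ v : ↥(Jᶜ : Set V), X ↑v) → ℝ := fun y => ∫ x, f (combineJ V X J y x) ∂κJ with hH
  have hjm : Measurable (fun yx : (∀ v : ↥(Jᶜ : Set V), X ↑v) × (∀ i : ↥J, X ↑i) =>
      f (combineJ V X J yx.1 yx.2)) := hfm.comp (measurable_combineJ V X J)
  have hHsm : StronglyMeasurable H := by
    rw [hH]; exact hjm.stronglyMeasurable.integral_prod_right'
  have hHb : ∀ y, |H y| ≤ D := by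
    intro y
    have := norm_integral_le_of_norm_le_const (μ := κJ)
      (f := fun x => f (combineJ V X J y x)) (C := D)
      (Filter.Eventually.of_forall fun x => by simpa [Real.norm_eq_abs] using hD _)
    simpa [hH, Real.norm_eq_abs, measure_univ] using this
  have h3 : ∀ y, |H y| ^ (2 ^ m) ≤ ∫ z, F (y, z) ∂κJ2 := by
    intro y
    have hfym : Measurable fun x : ∀ i : ↥J, X ↑i => f (combineJ V X J y x) :=
      hfm.comp ((measurable_combineJ V X J).comp (measurable_const.prodMk measurable_id))
    exact abs_integral_pow_le_box (fun i : ↥J => μ ↑i)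
      (fun x => f (combineJ V X J y x)) hfym D (fun x => hD _)
  have hinner_sm : StronglyMeasurable fun y => ∫ z, F (y, z) ∂κJ2 :=
    hFm.stronglyMeasurable.integral_prod_right'
  have hinner_b : ∀ y, |∫ z, F (y, z) ∂κJ2| ≤ D ^ Fintype.card (↥J → Bool) := by
    intro y
    have := norm_integral_le_of_norm_le_const (μ := κJ2) (f := fun z => F (y, z))
      (C := D ^ Fintype.card (↥J → Bool))
      (Filter.Eventually.of_forall fun z => by simpa [Real.norm_eq_abs] using hFb (y, z))
    simpa [Real.norm_eq_abs, measure_univ] using this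
  have h4 : ∫ y, (H y) ^ (2 ^ m) ∂κc ≤ ∫ y, (∫ z, F (y, z) ∂κJ2) ∂κc := by
    refine integral_mono
      (integrable_of_bound κc _ (D ^ (2 ^ m))
        ((hHsm.measurable.pow_const _).aestronglyMeasurable)
        (fun y => by rw [abs_pow]; exact pow_le_pow_left₀ (abs_nonneg _) (hHb y) _))
      (integrable_of_bound κc _ _ hinner_sm.aestronglyMeasurable hinner_b) ?_
    intro y
    calc (H y) ^ (2 ^ m) ≤ |H y| ^ (2 ^ m) := by rw [← abs_pow]; exact le_abs_self _
      _ ≤ ∫ z, F (y, z) ∂κJ2 := h3 y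
  have h5 : (∫ y, H y ∂κc) ^ (2 ^ m) ≤ ∫ y, (H y) ^ (2 ^ m) ∂κc :=
    pow_integral_le_even κc m hm0 H hHsm.aestronglyMeasurable D hHb
  have h6 : ∫ y, H y ∂κc = ∫ x, f x ∂(Measure.pi μ) := by
    have hE := measurePreserving_piEquivPiSubtypeProd μ (fun v => v ∈ J)
    set Esub := MeasurableEquiv.piEquivPiSubtypeProd X (fun v => v ∈ J) with hEsub
    have hfE : Measurable fun w : (∀ v : ↥J, X ↑v) × (∀ v : ↥(Jᶜ : Set V), X ↑v) =>
        f (Esub.symm w) := hfm.comp Esub.symm.measurable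
    have hint : Integrable (fun w : (∀ v : ↥J, X ↑v) × (∀ v : ↥(Jᶜ : Set V), X ↑v) =>
        f (Esub.symm w)) (κJ.prod κc) :=
      integrable_of_bound _ _ D hfE.aestronglyMeasurable (fun w => hD _)
    have hstep : ∫ w, f (Esub.symm w) ∂(κJ.prod κc) = ∫ y, H y ∂κc := by
      rw [integral_prod_symm _ hint]
      rfl
    have hstep2 : ∫ x, f x ∂(Measure.pi μ) = ∫ w, f (Esub.symm w) ∂(κJ.prod κc) := by
      calc ∫ x, f x ∂(Measure.pi μ)
          = ∫ x, f (Esub.symm (Esub x)) ∂(Measure.pi μ) := by simp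
        _ = ∫ w, f (Esub.symm w) ∂(κJ.prod κc) := by
            exact hE.integral_comp Esub.measurableEmbedding (fun w => f (Esub.symm w))
    rw [hstep2, hstep]
  have heven : Even (2 ^ m) := (Nat.even_pow).mpr ⟨even_two, hm0⟩
  have hUJ : |∫ x, f x ∂(Measure.pi μ)| ^ (2 ^ m) ≤ UJint X μ J f := by
    calc |∫ x, f x ∂(Measure.pi μ)| ^ (2 ^ m)
        = (∫ x, f x ∂(Measure.pi μ)) ^ (2 ^ m) := heven.pow_abs _
      _ = (∫ y, H y ∂κc) ^ (2 ^ m) := by rw [h6]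
      _ ≤ ∫ y, (H y) ^ (2 ^ m) ∂κc := h5
      _ ≤ ∫ y, (∫ z, F (y, z) ∂κJ2) ∂κc := h4
      _ = UJint X μ J f := h1.symm
  have hnm : J.ncard = m := by
    rw [← Nat.card_coe_set_eq, Nat.card_eq_fintype_card, hm]
  rw [UJnorm, hnm]
  have h2m : (0 : ℝ) < 2 ^ m := by positivity
  have hid : ((|∫ x, f x ∂(Measure.pi μ)| ^ (2 ^ m) : ℝ)) ^ ((1 : ℝ) / 2 ^ m)
      = |∫ x, f x ∂(Measure.pi μ)| := by
    rw [← Real.rpow_natCast |∫ x, f x ∂(Measure.pi μ)| (2 ^ m),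
      ← Real.rpow_mul (abs_nonneg _)]
    push_cast
    rw [mul_one_div, div_self h2m.ne', Real.rpow_one]
  calc |∫ x, f x ∂(Measure.pi μ)|
      = ((|∫ x, f x ∂(Measure.pi μ)| ^ (2 ^ m) : ℝ)) ^ ((1 : ℝ) / 2 ^ m) := hid.symm
    _ ≤ (UJint X μ J f) ^ ((1 : ℝ) / 2 ^ m) :=
        Real.rpow_le_rpow (pow_nonneg (abs_nonneg _) _) hUJ (by positivity)

end UAux

/-- For a nonempty antichain `𝓙` of nonempty subsets of `V` and bounded measurable `f`,
`|∫ f dμ| ≤ ‖f‖_{U^{V,𝓙}}`. -/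
theorem abs_integral_le_UFamNorm (V : Type) [Fintype V] [DecidableEq V] [Nonempty V]
    (X : V → Type) [∀ v, MeasurableSpace (X v)]
    (μ : ∀ v, Measure (X v)) [∀ v, IsProbabilityMeasure (μ v)]
    (𝓙 : Finset (Set V)) (h𝓙 : 𝓙.Nonempty)
    (h𝓙ne : ∀ J ∈ 𝓙, J.Nonempty)
    (h𝓙anti : ∀ J ∈ 𝓙, ∀ J' ∈ 𝓙, J ⊆ J' → J = J')
    (f : (∀ v, X v) → ℝ) (hfb : ∃ C, ∀ x, |f x| ≤ C) (hfm : Measurable f) :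
    |∫ x, f x ∂(Measure.pi μ)| ≤ UFamNorm X μ 𝓙 f := by
  classical
  obtain ⟨C, hC⟩ := hfb
  rw [UFamNorm]
  apply le_csInf
  · exact ⟨_, 0, fun _ => f, fun _ => ⟨⟨C, hC⟩, hfm⟩, fun x => by simp, rfl⟩
  · rintro r ⟨m, g, hg, hsum, rfl⟩
    have hgi : ∀ i, Integrable (g i) (Measure.pi μ) := by
      intro i
      obtain ⟨Ci, hCi⟩ := (hg i).1
      exact UAux.integrable_of_bound _ _ Ci (hg i).2.aestronglyMeasurable hCi
    have h₁ : ∫ x, f x ∂(Measure.pi μ)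
        = ∑ i ∈ Finset.range (m + 1), ∫ x, g i x ∂(Measure.pi μ) := by
      calc ∫ x, f x ∂(Measure.pi μ)
          = ∫ x, ∑ i ∈ Finset.range (m + 1), g i x ∂(Measure.pi μ) :=
            integral_congr_ae (Filter.Eventually.of_forall hsum)
        _ = ∑ i ∈ Finset.range (m + 1), ∫ x, g i x ∂(Measure.pi μ) :=
            integral_finset_sum _ (fun i _ => hgi i)
    have key : ∀ i, |∫ x, g i x ∂(Measure.pi μ)|
        ≤ (∏ J ∈ 𝓙, UJnorm X μ J (g i) ^ (2 ^ J.ncard)) ^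
          ((1 : ℝ) / ∑ J ∈ 𝓙, (2 : ℝ) ^ J.ncard) := by
      intro i
      obtain ⟨Ci, hCi⟩ := (hg i).1
      have hDi : ∀ x, |g i x| ≤ max Ci 0 := fun x => le_trans (hCi x) (le_max_left _ _)
      have hJn : ∀ J ∈ 𝓙, |∫ x, g i x ∂(Measure.pi μ)| ≤ UJnorm X μ J (g i) := fun J hJ =>
        UAux.abs_integral_le_UJnorm_aux V X μ J (h𝓙ne J hJ) (g i) (max Ci 0)
          (le_max_right _ _) hDi (hg i).2
      set A := |∫ x, g i x ∂(Measure.pi μ)| with hA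
      have hA0 : 0 ≤ A := abs_nonneg _
      set N : ℕ := ∑ J ∈ 𝓙, 2 ^ J.ncard with hN
      have hprod : A ^ N ≤ ∏ J ∈ 𝓙, UJnorm X μ J (g i) ^ (2 ^ J.ncard) := by
        rw [hN, ← Finset.prod_pow_eq_pow_sum]
        exact Finset.prod_le_prod (fun J _ => pow_nonneg hA0 _)
          (fun J hJ => pow_le_pow_left₀ hA0 (hJn J hJ) _)
      have hc : (∑ J ∈ 𝓙, (2 : ℝ) ^ J.ncard) = (N : ℝ) := by
        rw [hN]; push_cast; rfl
      have hN0 : (0 : ℝ) < (N : ℝ) := by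
        have : 0 < N := by
          rw [hN]
          exact Finset.sum_pos (fun J _ => Nat.pow_pos (by norm_num)) h𝓙
        exact_mod_cast this
      have hid : (A ^ N : ℝ) ^ ((1 : ℝ) / (N : ℝ)) = A := by
        rw [← Real.rpow_natCast A N, ← Real.rpow_mul hA0, mul_one_div, div_self hN0.ne',
          Real.rpow_one]
      calc A = (A ^ N : ℝ) ^ ((1 : ℝ) / (N : ℝ)) := hid.symm
        _ ≤ (∏ J ∈ 𝓙, UJnorm X μ J (g i) ^ (2 ^ J.ncard)) ^ ((1 : ℝ) / (N : ℝ)) :=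
            Real.rpow_le_rpow (pow_nonneg hA0 _) hprod (by positivity)
        _ = (∏ J ∈ 𝓙, UJnorm X μ J (g i) ^ (2 ^ J.ncard)) ^
              ((1 : ℝ) / ∑ J ∈ 𝓙, (2 : ℝ) ^ J.ncard) := by rw [hc]
    calc |∫ x, f x ∂(Measure.pi μ)|
        ≤ ∑ i ∈ Finset.range (m + 1), |∫ x, g i x ∂(Measure.pi μ)| := by
          rw [h₁]; exact Finset.abs_sum_le_sum_abs _ _
      _ ≤ ∑ i ∈ Finset.range (m + 1),
            (∏ J ∈ 𝓙, UJnorm X μ J (g i) ^ (2 ^ J.ncard)) ^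
              ((1 : ℝ) / ∑ J ∈ 𝓙, (2 : ℝ) ^ J.ncard) :=
          Finset.sum_le_sum fun i _ => key i

end
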